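/- With X = {0} ⊕ X_0 ⊕ X_1 ⊕ ⋯ as above, there is a continuous surjection from X^ω onto ∏_{i∈ω} X_i; consequently, if ∏_{i∈ω} X_i can be partitioned into infinitely many non-empty clopen sets, then X^ω is not CLP-compact. -/

import Mathlib

/-- CLP-compact: every clopen cover has a finite subcover. -/
def CLPCompact (X : Type*) [TopologicalSpace X] : Prop :=
  ∀ C : Set (Set X), (∀ U ∈ C, IsClopen U) → ⋃₀ C = Set.univ →
    ∃ D ⊆ C, D.Finite ∧ ⋃₀ D = Set.univ

/-- The one-point convergent sum X = {0} ⊕ X₀ ⊕ X₁ ⊕ ⋯ ; none plays the role of 0. -/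
def SumSpace (X : ℕ → Type*) : Type _ := Option (Σ i, X i)

/-- The coarsest topology making every open subset of every Xᵢ open, and every tail
{0} ∪ ⋃_{j≥i} Xⱼ open. -/
instance (X : ℕ → Type*) [∀ i, TopologicalSpace (X i)] : TopologicalSpace (SumSpace X) :=
  TopologicalSpace.generateFrom
    ({S | ∃ (i : ℕ) (U : Set (X i)), IsOpen U ∧
        S = (fun x : X i => (some ⟨i, x⟩ : SumSpace X)) '' U} ∪
     {S | ∃ i : ℕ, S = insert (none : SumSpace X)
        {y : SumSpace X | ∃ (j : ℕ) (x : X j), i ≤ j ∧ y = some ⟨j, x⟩}})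

section Aux

variable (X : ℕ → Type*) [∀ i, TopologicalSpace (X i)]

/-- The image of a set of `X i` inside `SumSpace X`. -/
def SumSpace.slice (i : ℕ) (U : Set (X i)) : Set (SumSpace X) :=
  (fun x : X i => (some ⟨i, x⟩ : SumSpace X)) '' U

lemma SumSpace.isOpen_slice (i : ℕ) {U : Set (X i)} (hU : IsOpen U) :
    IsOpen (SumSpace.slice X i U) :=
  TopologicalSpace.GenerateOpen.basic _ (Or.inl ⟨i, U, hU, rfl⟩)

lemma SumSpace.isOpen_compl_slice_univ (i : ℕ) :
    IsOpen ((SumSpace.slice X i Set.univ)ᶜ) := by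
  have : (SumSpace.slice X i Set.univ)ᶜ =
      (insert (none : SumSpace X)
        {y : SumSpace X | ∃ (j : ℕ) (x : X j), i + 1 ≤ j ∧ y = some ⟨j, x⟩}) ∪
      ⋃ j, ⋃ (_ : j ≠ i), SumSpace.slice X j Set.univ := by
    ext y
    constructor
    · intro hy
      match y with
      | none => exact Or.inl (Set.mem_insert _ _)
      | some ⟨j, x⟩ =>
        have hj : j ≠ i := by
          rintro rfl
          exact hy ⟨x, Set.mem_univ _, rfl⟩
        exact Or.inr (Set.mem_iUnion.2 ⟨j, Set.mem_iUnion.2 ⟨hj, x, Set.mem_univ _, rfl⟩⟩)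
    · rintro (hy | hy)
      · rcases hy with rfl | ⟨j, x, hij, rfl⟩
        · rintro ⟨x, -, h⟩; cases h
        · rintro ⟨x', -, h⟩
          have := (Option.some.injEq _ _).mp h
          have hji : j = i := congrArg Sigma.fst this.symm
          omega
      · rcases Set.mem_iUnion.1 hy with ⟨j, hj⟩
        rcases Set.mem_iUnion.1 hj with ⟨hji, x, -, rfl⟩
        rintro ⟨x', -, h⟩
        have := (Option.some.injEq _ _).mp h
        exact hji (congrArg Sigma.fst this.symm)
  rw [this]
  refine IsOpen.union ?_ (isOpen_iUnion fun j => isOpen_iUnion fun _ =>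
    SumSpace.isOpen_slice X j isOpen_univ)
  exact TopologicalSpace.GenerateOpen.basic _ (Or.inr ⟨i + 1, rfl⟩)

variable (hne : ∀ i, Nonempty (X i))

/-- The retraction `X → X i`. -/
noncomputable def SumSpace.proj (i : ℕ) : SumSpace X → X i := fun y =>
  Option.elim y (Classical.choice (hne i))
    (fun p => if h : p.1 = i then h ▸ p.2 else Classical.choice (hne i))

lemma SumSpace.proj_some (i : ℕ) (x : X i) :
    SumSpace.proj X hne i (some ⟨i, x⟩) = x := by
  show (if h : i = i then h ▸ x else _) = x
  rw [dif_pos rfl]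

lemma SumSpace.proj_eq_default (i : ℕ) (y : SumSpace X)
    (hy : y ∉ SumSpace.slice X i Set.univ) :
    SumSpace.proj X hne i y = Classical.choice (hne i) := by
  match y with
  | none => rfl
  | some ⟨j, x⟩ =>
    have hj : j ≠ i := by rintro rfl; exact hy ⟨x, Set.mem_univ _, rfl⟩
    show dite (j = i) (fun h => h ▸ x) (fun _ => Classical.choice (hne i)) =
      Classical.choice (hne i)
    exact dif_neg hj

lemma SumSpace.continuous_proj (i : ℕ) : Continuous (SumSpace.proj X hne i) := by
  rw [continuous_def]
  intro U hU
  by_cases hd : Classical.choice (hne i) ∈ U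
  · have : SumSpace.proj X hne i ⁻¹' U =
        SumSpace.slice X i U ∪ (SumSpace.slice X i Set.univ)ᶜ := by
      ext y
      by_cases hy : y ∈ SumSpace.slice X i Set.univ
      · rcases hy with ⟨x, -, rfl⟩
        simp only [Set.mem_preimage, Set.mem_union]
        change SumSpace.proj X hne i (some ⟨i, x⟩ : SumSpace X) ∈ U ↔ _
        rw [SumSpace.proj_some]
        constructor
        · intro hx; exact Or.inl ⟨x, hx, rfl⟩
        · rintro (⟨x', hx', h⟩ | h)
          · have hxx : x' = x := sigma_mk_injective (Option.some_injective _ h)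
            exact hxx ▸ hx'
          · exact absurd ⟨x, Set.mem_univ _, rfl⟩ h
      · simp only [Set.mem_preimage, SumSpace.proj_eq_default X hne i y hy, hd,
          Set.mem_union, true_iff]
        exact Or.inr hy
    rw [this]
    exact (SumSpace.isOpen_slice X i hU).union (SumSpace.isOpen_compl_slice_univ X i)
  · have : SumSpace.proj X hne i ⁻¹' U = SumSpace.slice X i U := by
      ext y
      by_cases hy : y ∈ SumSpace.slice X i Set.univ
      · rcases hy with ⟨x, -, rfl⟩
        simp only [Set.mem_preimage]
        change SumSpace.proj X hne i (some ⟨i, x⟩ : SumSpace X) ∈ U ↔ _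
        rw [SumSpace.proj_some]
        constructor
        · intro hx; exact ⟨x, hx, rfl⟩
        · rintro ⟨x', hx', h⟩
          have hxx : x' = x := sigma_mk_injective (Option.some_injective _ h)
          exact hxx ▸ hx'
      · simp only [Set.mem_preimage, SumSpace.proj_eq_default X hne i y hy, hd, false_iff]
        rintro ⟨x', -, h⟩
        exact hy ⟨x', Set.mem_univ _, h⟩
    rw [this]
    exact SumSpace.isOpen_slice X i hU

end Aux

/-- There is a continuous surjection X^ω → ∏ᵢ Xᵢ; hence if ∏ᵢ Xᵢ is partitioned into
infinitely many non-empty clopen sets, then X^ω is not CLP-compact. -/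
theorem sumSpace_power_not_clp (X : ℕ → Type*) [∀ i, TopologicalSpace (X i)]
    (hne : ∀ i, Nonempty (X i)) :
    (∃ f : (ℕ → SumSpace X) → ∀ i, X i, Continuous f ∧ Function.Surjective f) ∧
    ((∃ U : ℕ → Set (∀ i, X i), (∀ k, IsClopen (U k)) ∧ (∀ k, (U k).Nonempty) ∧
        Pairwise (Function.onFun Disjoint U) ∧ ⋃ k, U k = Set.univ) →
      ¬ CLPCompact (ℕ → SumSpace X)) := by
  set f : (ℕ → SumSpace X) → ∀ i, X i := fun g i => SumSpace.proj X hne i (g i) with hf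
  have hcont : Continuous f :=
    continuous_pi fun i => (SumSpace.continuous_proj X hne i).comp (continuous_apply i)
  have hsurj : Function.Surjective f := by
    intro y
    refine ⟨fun i => some ⟨i, y i⟩, ?_⟩
    funext i
    exact SumSpace.proj_some X hne i (y i)
  refine ⟨⟨f, hcont, hsurj⟩, ?_⟩
  rintro ⟨U, hclopen, hnonempty, hdisj, hcover⟩ hclp
  -- clopen cover of the domain by preimages
  obtain ⟨D, hDsub, hDfin, hDcover⟩ := hclp (Set.range fun k => f ⁻¹' U k)
    (by rintro V ⟨k, rfl⟩
        exact ⟨(hclopen k).1.preimage hcont, (hclopen k).2.preimage hcont⟩)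
    (by apply Set.eq_univ_of_forall
        intro g
        have : f g ∈ ⋃ k, U k := hcover ▸ Set.mem_univ _
        rcases Set.mem_iUnion.1 this with ⟨k, hk⟩
        exact ⟨f ⁻¹' U k, ⟨k, rfl⟩, hk⟩)
  -- choose an index for each member of D
  have hidx : ∀ V ∈ D, ∃ k, V = f ⁻¹' U k := by
    intro V hV
    rcases hDsub hV with ⟨k, rfl⟩
    exact ⟨k, rfl⟩
  choose idx hidx using hidx
  have hKfin : {k | ∃ V hV, idx V hV = k}.Finite := hDfin.dependent_image idx
  obtain ⟨k0, hk0⟩ := hKfin.infinite_compl.nonempty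
  obtain ⟨x, hx⟩ := hnonempty k0
  obtain ⟨g, rfl⟩ := hsurj x
  have hg : g ∈ ⋃₀ D := hDcover ▸ Set.mem_univ _
  rcases hg with ⟨V, hV, hgV⟩
  have hxk : f g ∈ U (idx V hV) := by
    have := hidx V hV ▸ hgV
    exact this
  have hne' : idx V hV ≠ k0 := fun h => hk0 ⟨V, hV, h⟩
  exact (hdisj hne').le_bot ⟨hxk, hx⟩
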